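/- Let n = p + q + z with p ≥ 1, q ≥ 1, z ≥ 0, and let J = diag(I_p, −I_q, 0_z) ∈ ℂ^{n×n}. Let A, B ∈ ℂ^{n×n} be Hermitian and suppose there exists an invertible U ∈ ℂ^{n×n} with Uᴴ B U = J and Uᴴ A U = diag(a₁, …, aₙ) where all a_i ≥ 0 and a_{p+1} ≤ a_{p+2} ≤ … ≤ a_{p+q} (so the negative-type finite eigenvalues of the pencil A − λB are λ_i⁻ = −a_{p+i}, i = 1,…,q, with λ₁⁻ ≥ λ₂⁻ ≥ …). Let 1 ≤ k ≤ q and let D ∈ ℂ^{k×k} be Hermitian positive semi-definite with eigenvalues ω₁ ≥ ω₂ ≥ … ≥ ω_k ≥ 0. Then the real number Σ_{i=1}^{k} ω_i a_{p+i} (which equals −Σ_{i=1}^{k} ω_i λ_i⁻) is the minimum (a lower bound that is attained) of the set { t ∈ ℝ : ∃ X ∈ ℂ^{n×k}, Xᴴ B X = −I_k and t = Re(trace(D Xᴴ A X)) }. -/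

import Mathlib

open Matrix BigOperators
open scoped ComplexOrder


lemma my_ite_mul_ite_mul {P Q : Prop} [Decidable P] [Decidable Q] (x y c : ℝ) :
    (if P then x else 0) * (if Q then y else 0) * c = if P ∧ Q then x * y * c else 0 := by
  by_cases hP : P <;> by_cases hQ : Q <;> simp [hP, hQ, mul_assoc]

lemma my_ite_mul_ite {P Q : Prop} [Decidable P] [Decidable Q] (x y : ℝ) :
    (if P then x else 0) * (if Q then y else 0) = if Q ∧ P then y * x else 0 := by
  by_cases hP : P <;> by_cases hQ : Q <;> simp [hP, hQ, mul_comm]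

lemma core_ineq (q k : ℕ) (hkq : k ≤ q)
    (b w : ℕ → ℝ) (t : ℕ → ℕ → ℝ)
    (hb0 : 0 ≤ b 0) (hbmono : ∀ s, s + 1 < q → b s ≤ b (s+1))
    (hw0 : ∀ l, 0 ≤ w l) (hwanti : ∀ l, w (l+1) ≤ w l)
    (hwk : w k = 0)
    (ht0 : ∀ s l, 0 ≤ t s l)
    (hT : ∀ r m, r ≤ m → m < k →
      (m:ℝ) + 1 - r ≤ ∑ s ∈ Finset.range q, ∑ l ∈ Finset.range k,
        (if r ≤ s ∧ l ≤ m then t s l else 0)) :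
    ∑ l ∈ Finset.range k, w l * b l ≤
      ∑ s ∈ Finset.range q, ∑ l ∈ Finset.range k, b s * w l * t s l := by
  classical
  set ε : ℕ → ℝ := fun r => if r = 0 then b 0 else b r - b (r-1) with hε
  set δ : ℕ → ℝ := fun m => w m - w (m+1) with hδ
  have hε0 : ∀ r, r < q → 0 ≤ ε r := by
    intro r hr
    rcases r with _ | r
    · simpa [hε] using hb0
    · have := hbmono r (by omega)
      simp only [hε, Nat.succ_ne_zero, if_false, Nat.succ_sub_one]
      linarith
  have hδ0 : ∀ m, 0 ≤ δ m := fun m => by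
    simp only [hδ]; linarith [hwanti m]
  have hbsum : ∀ s, b s = ∑ r ∈ Finset.range (s+1), ε r := by
    intro s
    induction s with
    | zero => simp [hε]
    | succ s ih =>
        rw [Finset.sum_range_succ, ← ih]
        simp [hε]
  have hwsum : ∀ l, l ≤ k → w l = ∑ m ∈ Finset.Ico l k, δ m := by
    intro l hl
    have h1 : ∑ m ∈ Finset.range k, δ m = w 0 - w k := by
      simp only [hδ]; exact Finset.sum_range_sub' w k
    have h2 : ∑ m ∈ Finset.range l, δ m = w 0 - w l := by
      simp only [hδ]; exact Finset.sum_range_sub' w l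
    rw [Finset.sum_Ico_eq_sub _ hl, h1, h2, hwk]; ring
  have hbind : ∀ s, s < q → b s = ∑ r ∈ Finset.range q, (if r ≤ s then ε r else 0) := by
    intro s hs
    have hfil : (Finset.range q).filter (fun r => r ≤ s) = Finset.range (s+1) := by
      ext r; simp only [Finset.mem_filter, Finset.mem_range]; omega
    rw [hbsum s, ← Finset.sum_filter, hfil]
  have hwind : ∀ l, l < k → w l = ∑ m ∈ Finset.range k, (if l ≤ m then δ m else 0) := by
    intro l hl
    have hfil : (Finset.range k).filter (fun m => l ≤ m) = Finset.Ico l k := by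
      ext m; simp only [Finset.mem_filter, Finset.mem_range, Finset.mem_Ico]; omega
    rw [hwsum l (le_of_lt hl), ← Finset.sum_filter, hfil]
  -- rewrite objective as 4-fold sum
  have hA : ∀ s ∈ Finset.range q, ∀ l ∈ Finset.range k, b s * w l * t s l
      = ∑ r ∈ Finset.range q, ∑ m ∈ Finset.range k,
          (if r ≤ s ∧ l ≤ m then ε r * δ m * t s l else 0) := by
    intro s hs l hl
    rw [Finset.mem_range] at hs hl
    rw [hbind s hs, hwind l hl, Finset.sum_mul_sum, Finset.sum_mul]
    refine Finset.sum_congr rfl fun r _ => ?_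
    rw [Finset.sum_mul]
    refine Finset.sum_congr rfl fun m _ => ?_
    exact my_ite_mul_ite_mul _ _ _
  have hswap : ∀ (F : ℕ → ℕ → ℕ → ℕ → ℝ),
      ∑ s ∈ Finset.range q, ∑ l ∈ Finset.range k, ∑ r ∈ Finset.range q,
        ∑ m ∈ Finset.range k, F s l r m
      = ∑ r ∈ Finset.range q, ∑ m ∈ Finset.range k, ∑ s ∈ Finset.range q,
        ∑ l ∈ Finset.range k, F s l r m := by
    intro F
    calc ∑ s ∈ Finset.range q, ∑ l ∈ Finset.range k, ∑ r ∈ Finset.range q,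
        ∑ m ∈ Finset.range k, F s l r m
        = ∑ s ∈ Finset.range q, ∑ r ∈ Finset.range q, ∑ l ∈ Finset.range k,
            ∑ m ∈ Finset.range k, F s l r m :=
          Finset.sum_congr rfl fun s _ => Finset.sum_comm
      _ = ∑ r ∈ Finset.range q, ∑ s ∈ Finset.range q, ∑ l ∈ Finset.range k,
            ∑ m ∈ Finset.range k, F s l r m := Finset.sum_comm
      _ = ∑ r ∈ Finset.range q, ∑ s ∈ Finset.range q, ∑ m ∈ Finset.range k,
            ∑ l ∈ Finset.range k, F s l r m :=
          Finset.sum_congr rfl fun r _ => Finset.sum_congr rfl fun s _ => Finset.sum_comm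
      _ = ∑ r ∈ Finset.range q, ∑ m ∈ Finset.range k, ∑ s ∈ Finset.range q,
            ∑ l ∈ Finset.range k, F s l r m :=
          Finset.sum_congr rfl fun r _ => Finset.sum_comm
  have hLHS : ∑ s ∈ Finset.range q, ∑ l ∈ Finset.range k, b s * w l * t s l
      = ∑ r ∈ Finset.range q, ∑ m ∈ Finset.range k, ε r * δ m *
          (∑ s ∈ Finset.range q, ∑ l ∈ Finset.range k, if r ≤ s ∧ l ≤ m then t s l else 0) := by
    rw [Finset.sum_congr rfl (fun s hs => Finset.sum_congr rfl (fun l hl => hA s hs l hl))]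
    rw [hswap (fun s l r m => if r ≤ s ∧ l ≤ m then ε r * δ m * t s l else 0)]
    refine Finset.sum_congr rfl fun r _ => Finset.sum_congr rfl fun m _ => ?_
    rw [Finset.mul_sum]
    refine Finset.sum_congr rfl fun s _ => ?_
    rw [Finset.mul_sum]
    refine Finset.sum_congr rfl fun l _ => ?_
    split_ifs <;> ring
  -- rewrite target sum
  have hB : ∀ l ∈ Finset.range k, w l * b l
      = ∑ r ∈ Finset.range q, ∑ m ∈ Finset.range k,
          (if r ≤ l ∧ l ≤ m then ε r * δ m else 0) := by
    intro l hl
    rw [Finset.mem_range] at hl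
    rw [hbind l (lt_of_lt_of_le hl hkq), hwind l hl, Finset.sum_mul_sum, Finset.sum_comm]
    refine Finset.sum_congr rfl fun r _ => Finset.sum_congr rfl fun m _ => ?_
    exact my_ite_mul_ite (P := l ≤ m) (Q := r ≤ l) _ _
  have hRHS : ∑ l ∈ Finset.range k, w l * b l
      = ∑ r ∈ Finset.range q, ∑ m ∈ Finset.range k, ε r * δ m *
          (∑ l ∈ Finset.range k, if r ≤ l ∧ l ≤ m then (1:ℝ) else 0) := by
    rw [Finset.sum_congr rfl hB]
    rw [Finset.sum_comm]
    refine Finset.sum_congr rfl fun r _ => ?_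
    rw [Finset.sum_comm]
    refine Finset.sum_congr rfl fun m _ => ?_
    rw [Finset.mul_sum]
    refine Finset.sum_congr rfl fun l _ => ?_
    split_ifs <;> ring
  rw [hLHS, hRHS]
  refine Finset.sum_le_sum fun r hr => Finset.sum_le_sum fun m hm => ?_
  rw [Finset.mem_range] at hr hm
  by_cases hrm : r ≤ m
  · have hc : (∑ l ∈ Finset.range k, if r ≤ l ∧ l ≤ m then (1:ℝ) else 0) = (m:ℝ) + 1 - r := by
      have hfil : (Finset.range k).filter (fun l => r ≤ l ∧ l ≤ m) = Finset.Icc r m := by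
        ext l; simp only [Finset.mem_filter, Finset.mem_range, Finset.mem_Icc]; omega
      rw [← Finset.sum_filter, hfil, Finset.sum_const, Nat.card_Icc, nsmul_eq_mul, mul_one]
      have : r ≤ m + 1 := by omega
      push_cast [this]
      ring
    rw [hc]
    exact mul_le_mul_of_nonneg_left (hT r m hrm hm) (mul_nonneg (hε0 r hr) (hδ0 m))
  · have hc : (∑ l ∈ Finset.range k, if r ≤ l ∧ l ≤ m then (1:ℝ) else 0) = 0 := by
      apply Finset.sum_eq_zero; intro l _; rw [if_neg]; omega
    rw [hc, mul_zero]
    apply mul_nonneg (mul_nonneg (hε0 r hr) (hδ0 m))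
    refine Finset.sum_nonneg fun s _ => Finset.sum_nonneg fun l _ => ?_
    split_ifs with h
    exacts [ht0 s l, le_rfl]

/-- 0/1 diagonal matrix of an index predicate. -/
abbrev zod {n' : Type*} [DecidableEq n'] (c : n' → Prop) [DecidablePred c] : Matrix n' n' ℂ :=
  Matrix.diagonal (fun i => if c i then (1:ℂ) else 0)

lemma zod_herm {n' : Type*} [DecidableEq n'] (c : n' → Prop) [DecidablePred c] :
    (zod c)ᴴ = zod c := by
  ext i j
  rcases eq_or_ne i j with rfl | hij
  · simp [Matrix.conjTranspose_apply, Matrix.diagonal_apply_eq, apply_ite (star : ℂ → ℂ)]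
  · simp [Matrix.conjTranspose_apply, Matrix.diagonal_apply_ne _ hij,
      Matrix.diagonal_apply_ne _ (Ne.symm hij)]

lemma zod_sq {n' : Type*} [Fintype n'] [DecidableEq n'] (c : n' → Prop) [DecidablePred c] :
    zod c * zod c = zod c := by
  rw [Matrix.diagonal_mul_diagonal]
  refine congrArg Matrix.diagonal ?_
  funext i
  by_cases h : c i <;> simp [h]

lemma sandwich_eq {n k : ℕ} (Z : Matrix (Fin n) (Fin k) ℂ)
    (c : Fin n → Prop) [DecidablePred c] (ck : Fin k → Prop) [DecidablePred ck] :
    zod ck * (Zᴴ * zod c * Z) * zod ck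
      = (zod c * Z * zod ck)ᴴ * (zod c * Z * zod ck) := by
  have h1 : (zod c * Z * zod ck)ᴴ = zod ck * Zᴴ * (zod c) := by
    rw [Matrix.conjTranspose_mul, Matrix.conjTranspose_mul, zod_herm, zod_herm,
      Matrix.mul_assoc]
  rw [h1]
  have h2 : ∀ X : Matrix (Fin n) (Fin k) ℂ, zod c * (zod c * X) = zod c * X := by
    intro X; rw [← Matrix.mul_assoc, zod_sq]
  simp only [Matrix.mul_assoc, h2]

lemma sandwich_psd {n k : ℕ} (Z : Matrix (Fin n) (Fin k) ℂ)
    (c : Fin n → Prop) [DecidablePred c] (ck : Fin k → Prop) [DecidablePred ck] :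
    (zod ck * (Zᴴ * zod c * Z) * zod ck).PosSemidef := by
  rw [sandwich_eq]
  exact Matrix.posSemidef_conjTranspose_mul_self _

lemma card_filter_fin_le (k m : ℕ) (hmk : m < k) :
    (Finset.univ.filter (fun l : Fin k => (l:ℕ) ≤ m)).card = m + 1 := by
  rw [← Finset.card_range (m+1)]
  refine Finset.card_bij'
      (fun (l : Fin k) (_ : l ∈ Finset.univ.filter (fun l : Fin k => (l:ℕ) ≤ m)) => (l : ℕ))
      (fun a (ha : a ∈ Finset.range (m+1)) =>
        (⟨a, Nat.lt_of_lt_of_le (Finset.mem_range.mp ha) hmk⟩ : Fin k)) ?_ ?_ ?_ ?_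
  · intro l hl
    simp only [Finset.mem_filter] at hl
    simp only [Finset.mem_range]
    omega
  · intro a ha
    simp only [Finset.mem_range] at ha
    simp only [Finset.mem_filter, Finset.mem_univ, true_and]
    omega
  · intro l hl
    rfl
  · intro a ha
    rfl

lemma diag_re_nonneg {k : ℕ} {M : Matrix (Fin k) (Fin k) ℂ} (hM : M.PosSemidef) (i : Fin k) :
    0 ≤ (M i i).re := by
  have := hM.re_dotProduct_nonneg (Pi.single i 1)
  simpa [Matrix.mulVec_single, dotProduct, Pi.single_apply, Complex.normSq_apply,
    Finset.sum_ite_eq, apply_ite] using this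

lemma psd_low_rank_trace_lb {k : ℕ} (r ρ : ℕ) (c : Fin k → Prop) [DecidablePred c]
    (M G N : Matrix (Fin k) (Fin k) ℂ)
    (hM : M.PosSemidef) (hG : G.PosSemidef) (hN : N.PosSemidef)
    (hEq : M = Matrix.diagonal (fun l => if c l then (1:ℂ) else 0) + G - N)
    (hrank : N.rank ≤ r)
    (hρ : (Finset.univ.filter (fun l => c l)).card = ρ) :
    (ρ : ℝ) - r ≤ (Matrix.trace M).re := by
  classical
  set P : Matrix (Fin k) (Fin k) ℂ := Matrix.diagonal (fun l => if c l then (1:ℂ) else 0) with hP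
  set V : Matrix (Fin k) (Fin k) ℂ := (hN.1.eigenvectorUnitary : Matrix (Fin k) (Fin k) ℂ) with hVdef
  have hV1 : V * Vᴴ = 1 := by
    simpa [Matrix.star_eq_conjTranspose] using
      (Matrix.mem_unitaryGroup_iff).mp (hN.1.eigenvectorUnitary).2
  have hV2 : Vᴴ * V = 1 := by
    simpa [Matrix.star_eq_conjTranspose] using
      (Matrix.mem_unitaryGroup_iff').mp (hN.1.eigenvectorUnitary).2
  have hVN : Vᴴ * N * V = Matrix.diagonal (fun i => (hN.1.eigenvalues i : ℂ)) := by
    have := Matrix.IsHermitian.conjStarAlgAut_star_eigenvectorUnitary hN.1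
    simp only [Unitary.conjStarAlgAut_apply, Unitary.coe_star, star_star,
      Matrix.star_eq_conjTranspose, Matrix.conjTranspose_conjTranspose] at this
    exact this
  set eig := hN.1.eigenvalues with heig
  have htr : Matrix.trace M = Matrix.trace (Vᴴ * M * V) := by
    rw [Matrix.trace_mul_cycle, hV1, Matrix.one_mul]
  have hconj : Vᴴ * M * V = Vᴴ * P * V + Vᴴ * G * V - Matrix.diagonal (fun i => (eig i : ℂ)) := by
    rw [hEq, ← hVN]
    noncomm_ring
  have hentry : ∀ i, ((Vᴴ * M * V) i i).re
      = ((Vᴴ * P * V) i i).re + ((Vᴴ * G * V) i i).re - eig i := by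
    intro i
    rw [hconj]
    simp [Matrix.sub_apply, Matrix.add_apply, Matrix.diagonal_apply_eq]
  have hPtr : Matrix.trace (Vᴴ * P * V) = (ρ : ℂ) := by
    rw [Matrix.trace_mul_cycle, hV1, Matrix.one_mul, hP, Matrix.trace_diagonal]
    rw [Finset.sum_boole]
    exact_mod_cast congrArg (Nat.cast : ℕ → ℂ) hρ
  have hαsum : ∑ i, ((Vᴴ * P * V) i i).re = (ρ : ℝ) := by
    have h2 : (Matrix.trace (Vᴴ * P * V)).re = (ρ:ℝ) := by rw [hPtr]; simp
    rw [← h2]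
    simp [Matrix.trace, Matrix.diag, Complex.re_sum]
  have hα1 : ∀ i, ((Vᴴ * P * V) i i).re ≤ 1 := by
    intro i
    have hVi : ((Vᴴ * V) i i).re = 1 := by rw [hV2]; simp [Matrix.one_apply]
    have hexp : ((Vᴴ * P * V) i i)
        = ∑ j, (if c j then (starRingEnd ℂ) (V j i) * V j i else 0) := by
      simp [Matrix.mul_apply, Matrix.conjTranspose_apply, hP, Matrix.diagonal_apply,
        ite_mul, mul_ite, Finset.sum_ite_eq', Finset.mul_sum, Finset.sum_mul]
    calc ((Vᴴ * P * V) i i).re = ∑ j, (if c j then Complex.normSq (V j i) else 0) := by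
          rw [hexp, Complex.re_sum]
          refine Finset.sum_congr rfl fun j _ => ?_
          split_ifs <;> simp [Complex.normSq_apply, Complex.mul_re]
      _ ≤ ∑ j, Complex.normSq (V j i) :=
          Finset.sum_le_sum fun j _ => by split_ifs <;> simp [Complex.normSq_nonneg]
      _ = ((Vᴴ * V) i i).re := by
          simp [Matrix.mul_apply, Matrix.conjTranspose_apply, Complex.re_sum,
            Complex.normSq_apply, Complex.mul_re]
      _ = 1 := hVi
  have hcard : (Finset.univ.filter (fun i => eig i ≠ 0)).card ≤ r := by
    have h1 : N.rank = Fintype.card {i // eig i ≠ 0} := hN.1.rank_eq_card_non_zero_eigs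
    have h2 : Fintype.card {i // eig i ≠ 0}
        = (Finset.univ.filter (fun i => eig i ≠ 0)).card := Fintype.card_subtype _
    omega
  set S := Finset.univ.filter (fun i => eig i ≠ 0) with hS
  have hMV := hM.conjTranspose_mul_mul_same V
  have hGV := hG.conjTranspose_mul_mul_same V
  have step1 : ∑ i ∈ Sᶜ, ((Vᴴ * M * V) i i).re ≤ ∑ i, ((Vᴴ * M * V) i i).re :=
    Finset.sum_le_sum_of_subset_of_nonneg (Finset.subset_univ _)
      (fun i _ _ => diag_re_nonneg hMV i)
  have step2 : ∀ i ∈ Sᶜ, ((Vᴴ * P * V) i i).re ≤ ((Vᴴ * M * V) i i).re := by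
    intro i hi
    have hieig : eig i = 0 := by
      simpa [hS, Finset.mem_compl, Finset.mem_filter] using hi
    rw [hentry i, hieig]
    have := diag_re_nonneg hGV i
    linarith
  have step3 : (ρ:ℝ) - r ≤ ∑ i ∈ Sᶜ, ((Vᴴ * P * V) i i).re := by
    have hsum := Finset.sum_add_sum_compl S (fun i => ((Vᴴ * P * V) i i).re)
    rw [hαsum] at hsum
    have hb : ∑ i ∈ S, ((Vᴴ * P * V) i i).re ≤ (S.card : ℝ) := by
      calc ∑ i ∈ S, ((Vᴴ * P * V) i i).re ≤ ∑ _i ∈ S, (1:ℝ) :=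
            Finset.sum_le_sum (fun i _ => hα1 i)
        _ = S.card := by simp
    have hc : (S.card : ℝ) ≤ r := by exact_mod_cast hcard
    linarith
  have main : (ρ:ℝ) - r ≤ ∑ i, ((Vᴴ * M * V) i i).re :=
    le_trans step3 (le_trans (Finset.sum_le_sum step2) step1)
  have hfin : ∑ i, ((Vᴴ * M * V) i i).re = (Matrix.trace M).re := by
    rw [htr]
    simp [Matrix.trace, Matrix.diag, Complex.re_sum]
  linarith [main, le_of_eq hfin]

lemma block_trace_lb (p q z k : ℕ) (hkq : k ≤ q)
    (Z : Matrix (Fin (p+q+z)) (Fin k) ℂ)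
    (hZ : Zᴴ * (Matrix.diagonal fun i : Fin (p+q+z) =>
        if (i:ℕ) < p then (1:ℂ) else if (i:ℕ) < p+q then -1 else 0) * Z = -1)
    (r m : ℕ) (hrm : r ≤ m) (hmk : m < k) :
    (m:ℝ) + 1 - r ≤ ∑ l : Fin k, ∑ i : Fin (p+q+z),
      (if (l:ℕ) ≤ m ∧ p + r ≤ (i:ℕ) ∧ (i:ℕ) < p + q then Complex.normSq (Z i l) else 0) := by
  classical
  set cdp : Fin (p+q+z) → Prop := fun i => (i:ℕ) < p with hcdp
  set csl : Fin (p+q+z) → Prop := fun i => p ≤ (i:ℕ) ∧ (i:ℕ) < p + r with hcsl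
  set crr : Fin (p+q+z) → Prop := fun i => p + r ≤ (i:ℕ) ∧ (i:ℕ) < p + q with hcrr
  have hJd : (Matrix.diagonal fun i : Fin (p+q+z) =>
        if (i:ℕ) < p then (1:ℂ) else if (i:ℕ) < p+q then -1 else 0)
      = zod cdp - zod csl - zod crr := by
    ext i j
    rcases eq_or_ne i j with rfl | hij
    · simp only [Matrix.sub_apply, Matrix.diagonal_apply_eq, hcdp, hcsl, hcrr]
      split_ifs <;> (try norm_num) <;> omega
    · simp [Matrix.sub_apply, Matrix.diagonal_apply_ne _ hij]
  have hsplit : Zᴴ * zod crr * Z = 1 + Zᴴ * zod cdp * Z - Zᴴ * zod csl * Z := by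
    rw [hJd] at hZ
    simp only [Matrix.mul_sub, Matrix.sub_mul] at hZ
    rw [sub_sub] at hZ
    have hA := sub_eq_iff_eq_add.mp hZ
    rw [hA]
    abel
  set M := zod (fun l : Fin k => (l:ℕ) ≤ m) * (Zᴴ * zod crr * Z) * zod (fun l : Fin k => (l:ℕ) ≤ m) with hM
  set G := zod (fun l : Fin k => (l:ℕ) ≤ m) * (Zᴴ * zod cdp * Z) * zod (fun l : Fin k => (l:ℕ) ≤ m) with hG
  set N := zod (fun l : Fin k => (l:ℕ) ≤ m) * (Zᴴ * zod csl * Z) * zod (fun l : Fin k => (l:ℕ) ≤ m) with hN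
  have hEqM : M = Matrix.diagonal (fun l : Fin k => if ((l:ℕ) ≤ m) then (1:ℂ) else 0) + G - N := by
    rw [hM, hsplit]
    simp only [Matrix.mul_add, Matrix.add_mul, Matrix.mul_sub, Matrix.sub_mul, Matrix.mul_one]
    rw [zod_sq]
  have hrank : N.rank ≤ r := by
    rw [hN, sandwich_eq, Matrix.rank_conjTranspose_mul_self, Matrix.mul_assoc]
    refine le_trans (Matrix.rank_mul_le_left _ _) ?_
    rw [Matrix.rank_diagonal, Fintype.card_subtype]
    have hsub : (Finset.univ.filter fun i : Fin (p+q+z) => (if csl i then (1:ℂ) else 0) ≠ 0)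
        = Finset.univ.filter (fun i : Fin (p+q+z) => csl i) := by
      ext i
      by_cases h : csl i <;> simp [h]
    rw [hsub]
    have := Finset.card_le_card_of_injOn
      (s := Finset.univ.filter (fun i : Fin (p+q+z) => csl i))
      (t := Finset.range r) (fun i : Fin (p+q+z) => (i:ℕ) - p) ?_ ?_
    · simpa using this
    · intro i hi
      simp only [Finset.mem_coe, Finset.mem_filter, hcsl] at hi
      simp only [Finset.mem_coe, Finset.mem_range]
      omega
    · intro i hi j hj hij
      simp only [Finset.coe_filter, Set.mem_setOf_eq, hcsl] at hi hj
      have hij' : (i:ℕ) - p = (j:ℕ) - p := hij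
      apply Fin.ext
      omega
  have hρ : (Finset.univ.filter (fun l : Fin k => ((l:ℕ) ≤ m))).card = m + 1 :=
    card_filter_fin_le k m hmk
  have hK := psd_low_rank_trace_lb r (m+1) (fun l : Fin k => (l:ℕ) ≤ m) M G N
    (sandwich_psd Z crr (fun l : Fin k => (l:ℕ) ≤ m)) (sandwich_psd Z cdp (fun l : Fin k => (l:ℕ) ≤ m)) (sandwich_psd Z csl (fun l : Fin k => (l:ℕ) ≤ m))
    hEqM hrank hρ
  have htr : (Matrix.trace M).re = ∑ l : Fin k, ∑ i : Fin (p+q+z),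
      (if (l:ℕ) ≤ m ∧ p + r ≤ (i:ℕ) ∧ (i:ℕ) < p + q then Complex.normSq (Z i l) else 0) := by
    have h1 : Matrix.trace M = Matrix.trace (zod (fun l : Fin k => (l:ℕ) ≤ m) * (Zᴴ * zod crr * Z)) := by
      rw [hM, Matrix.trace_mul_cycle, zod_sq]
    rw [h1]
    simp only [Matrix.trace, Matrix.diag_apply]
    rw [Complex.re_sum]
    refine Finset.sum_congr rfl fun l _ => ?_
    have hCl : (zod (fun l : Fin k => (l:ℕ) ≤ m) * (Zᴴ * zod crr * Z)) l l
        = (if ((l:ℕ) ≤ m) then (1:ℂ) else 0) *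
          ∑ i, (star (Z i l) * (if crr i then (1:ℂ) else 0)) * Z i l := by
      rw [Matrix.diagonal_mul]
      congr 1
      rw [Matrix.mul_apply]
      refine Finset.sum_congr rfl fun i _ => ?_
      rw [Matrix.mul_diagonal, Matrix.conjTranspose_apply]
    rw [hCl]
    by_cases hlm : ((l:ℕ) ≤ m)
    · rw [if_pos hlm, one_mul, Complex.re_sum]
      refine Finset.sum_congr rfl fun i _ => ?_
      by_cases hi : crr i
      · rw [if_pos hi, mul_one, if_pos]
        · simp [Complex.normSq_apply, Complex.mul_re, Complex.star_def]
        · exact ⟨hlm, hi⟩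
      · rw [if_neg hi, mul_zero, zero_mul, if_neg]
        · simp
        · rw [hcrr] at hi; tauto
    · rw [if_neg hlm, zero_mul]
      simp only [Complex.zero_re]
      symm
      apply Finset.sum_eq_zero
      intro i _
      rw [if_neg]
      tauto
  have hcast : ((m+1:ℕ):ℝ) - r = (m:ℝ) + 1 - r := by push_cast; ring
  rw [← htr, ← hcast]
  exact hK

lemma sum_fin_block {p q z : ℕ} (f : Fin (p+q+z) → ℝ)
    (hf : ∀ i : Fin (p+q+z), ¬(p ≤ (i:ℕ) ∧ (i:ℕ) < p + q) → f i = 0) :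
    ∑ i : Fin (p+q+z), f i = ∑ s : Fin q, f ⟨p + (s:ℕ), by have := s.isLt; omega⟩ := by
  classical
  set emb : Fin q ↪ Fin (p+q+z) :=
    ⟨fun s => ⟨p + (s:ℕ), by have := s.isLt; omega⟩, by
      intro x y hxy
      have hv := congrArg Fin.val hxy
      simp only at hv
      exact Fin.ext (by omega)⟩ with hemb
  have h1 : ∑ s : Fin q, f ⟨p + (s:ℕ), by have := s.isLt; omega⟩
      = ∑ i ∈ Finset.univ.map emb, f i := by
    rw [Finset.sum_map]
    rfl
  rw [h1]
  refine (Finset.sum_subset (Finset.subset_univ _) ?_).symm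
  intro i _ hnot
  apply hf
  intro hcond
  apply hnot
  simp only [Finset.mem_map, Finset.mem_univ, true_and, hemb, Function.Embedding.coeFn_mk]
  refine ⟨⟨(i:ℕ) - p, by omega⟩, ?_⟩
  apply Fin.ext
  show p + ((i:ℕ) - p) = (i:ℕ)
  omega

lemma sum_fin_block_le {p q z : ℕ} (f : Fin (p+q+z) → ℝ) (hf : ∀ i, 0 ≤ f i) :
    ∑ s : Fin q, f ⟨p + (s:ℕ), by have := s.isLt; omega⟩ ≤ ∑ i : Fin (p+q+z), f i := by
  classical
  set emb : Fin q ↪ Fin (p+q+z) :=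
    ⟨fun s => ⟨p + (s:ℕ), by have := s.isLt; omega⟩, by
      intro x y hxy
      have hv := congrArg Fin.val hxy
      simp only at hv
      exact Fin.ext (by omega)⟩ with hemb
  have h1 : (∑ s : Fin q, f ⟨p + (s:ℕ), by have := s.isLt; omega⟩)
      = ∑ i ∈ Finset.univ.map emb, f i := by
    rw [Finset.sum_map]
    rfl
  rw [h1]
  exact Finset.sum_le_sum_of_subset_of_nonneg (Finset.subset_univ _) (fun i _ _ => hf i)


/-- The paper's Corollary 3.2 in the diagonalizable case: with
`Uᴴ B U = J = diag(I_p, -I_q, 0_z)`, `Uᴴ A U = diag(a₁,…,aₙ) ⪰ 0`, the entries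
`a_{p+1} ≤ … ≤ a_{p+q}` being the negatives of the negative-type eigenvalues,
`D ⪰ 0` Hermitian with eigenvalues `ω₁ ≥ … ≥ ω_k ≥ 0` and `k ≤ q`, the quantity
`∑ ω_i a_{p+i} = -∑ ω_i λ_i⁻` is the minimum of `Re(trace (D Xᴴ A X))` over
`Xᴴ B X = -I_k`. -/
theorem trace_inf_indefinite_B_neg_constraint
    (p q z k : ℕ) (hp : 1 ≤ p) (hq : 1 ≤ q) (hk : 1 ≤ k) (hkq : k ≤ q)
    (A B : Matrix (Fin (p + q + z)) (Fin (p + q + z)) ℂ)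
    (hA : A.IsHermitian) (hB : B.IsHermitian)
    (U : Matrix (Fin (p + q + z)) (Fin (p + q + z)) ℂ) (hU : IsUnit U)
    (a : Fin (p + q + z) → ℝ) (ha : ∀ i, 0 ≤ a i)
    (hsort : ∀ i j : Fin (p + q + z), p ≤ (i : ℕ) → i ≤ j → (j : ℕ) < p + q → a i ≤ a j)
    (hUB : Uᴴ * B * U = Matrix.diagonal fun i : Fin (p + q + z) =>
      if (i : ℕ) < p then (1 : ℂ) else if (i : ℕ) < p + q then -1 else 0)
    (hUA : Uᴴ * A * U = Matrix.diagonal fun i => (a i : ℂ))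
    (D : Matrix (Fin k) (Fin k) ℂ) (hD : D.PosSemidef)
    (Q : Matrix (Fin k) (Fin k) ℂ) (hQ : Qᴴ * Q = 1)
    (ω : Fin k → ℝ) (hω : Antitone ω) (hω0 : ∀ i, 0 ≤ ω i)
    (hQD : Qᴴ * D * Q = Matrix.diagonal fun i => (ω i : ℂ)) :
    IsLeast {t : ℝ | ∃ X : Matrix (Fin (p + q + z)) (Fin k) ℂ,
        Xᴴ * B * X = -1 ∧ t = (Matrix.trace (D * (Xᴴ * A * X))).re}
      (∑ i : Fin k, ω i * a ⟨p + (i : ℕ), by have := i.isLt; omega⟩) := by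
  classical
  have hQQ : Q * Qᴴ = 1 := mul_eq_one_comm.mp hQ
  set g : Fin k → Fin (p + q + z) := fun l => ⟨p + (l : ℕ), by have := l.isLt; omega⟩ with hg
  have hginj : Function.Injective g := by
    intro x y hxy
    have hv : p + (x : ℕ) = p + (y : ℕ) := congrArg Fin.val hxy
    exact Fin.ext (by omega)
  constructor
  · -- membership: the minimizer X₀
    set X₀ := U.submatrix id g * Qᴴ with hX₀
    have hsub : ∀ C : Matrix (Fin (p+q+z)) (Fin (p+q+z)) ℂ,
        (U.submatrix id g)ᴴ * C * U.submatrix id g = (Uᴴ * C * U).submatrix g g := by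
      intro C
      ext l l'
      simp [Matrix.mul_apply, Matrix.submatrix_apply, Matrix.conjTranspose_apply,
        Finset.mul_sum, Finset.sum_mul]
    have hconj : ∀ C : Matrix (Fin (p+q+z)) (Fin (p+q+z)) ℂ,
        X₀ᴴ * C * X₀ = Q * ((Uᴴ * C * U).submatrix g g) * Qᴴ := by
      intro C
      rw [hX₀, Matrix.conjTranspose_mul, Matrix.conjTranspose_conjTranspose, ← hsub C]
      simp only [Matrix.mul_assoc]
    have hXB : X₀ᴴ * B * X₀ = -1 := by
      rw [hconj B, hUB]
      have h2 : (Matrix.diagonal fun i : Fin (p + q + z) =>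
          if (i : ℕ) < p then (1 : ℂ) else if (i : ℕ) < p + q then -1 else 0).submatrix g g
          = (-1 : Matrix (Fin k) (Fin k) ℂ) := by
        ext l l'
        rcases eq_or_ne l l' with rfl | hll
        · rw [Matrix.submatrix_apply, Matrix.diagonal_apply_eq]
          rw [if_neg (by simp [hg]), if_pos (by simp only [hg]; have := l.isLt; omega)]
          simp [Matrix.neg_apply, Matrix.one_apply]
        · rw [Matrix.submatrix_apply, Matrix.diagonal_apply_ne _ (fun h => hll (hginj h))]
          simp [Matrix.neg_apply, Matrix.one_apply, hll]
      rw [h2]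
      simp only [Matrix.mul_neg, Matrix.neg_mul, Matrix.mul_one]
      rw [hQQ]
    refine ⟨X₀, hXB, ?_⟩
    have hXA : X₀ᴴ * A * X₀ = Q * Matrix.diagonal (fun l : Fin k => (a (g l) : ℂ)) * Qᴴ := by
      rw [hconj A, hUA]
      congr 1
      congr 1
      ext l l'
      rcases eq_or_ne l l' with rfl | hll
      · simp [Matrix.submatrix_apply]
      · rw [Matrix.submatrix_apply, Matrix.diagonal_apply_ne _ (fun h => hll (hginj h)),
          Matrix.diagonal_apply_ne _ hll]
    rw [hXA]
    have h3 : D * (Q * Matrix.diagonal (fun l : Fin k => (a (g l) : ℂ)) * Qᴴ)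
        = (D * Q * Matrix.diagonal (fun l : Fin k => (a (g l) : ℂ))) * Qᴴ := by
      simp only [Matrix.mul_assoc]
    rw [h3, Matrix.trace_mul_comm, ← Matrix.mul_assoc, ← Matrix.mul_assoc, hQD,
      Matrix.diagonal_mul_diagonal, Matrix.trace_diagonal]
    rw [Complex.re_sum]
    refine Finset.sum_congr rfl fun l _ => ?_
    rw [← Complex.ofReal_mul, Complex.ofReal_re]
  · -- lower bound
    rintro t ⟨X, hXBc, ht⟩
    have hdet : IsUnit U.det := (Matrix.isUnit_iff_isUnit_det U).mp hU
    have hUW : U * U⁻¹ = 1 := Matrix.mul_nonsing_inv U hdet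
    have hWH : (U⁻¹)ᴴ * Uᴴ = 1 := by
      rw [← Matrix.conjTranspose_mul, hUW, Matrix.conjTranspose_one]
    set Z := U⁻¹ * X * Q with hZdef
    have key : ∀ C : Matrix (Fin (p+q+z)) (Fin (p+q+z)) ℂ,
        Zᴴ * (Uᴴ * C * U) * Z = Qᴴ * (Xᴴ * C * X) * Q := by
      intro C
      rw [hZdef]
      simp only [Matrix.conjTranspose_mul, Matrix.mul_assoc]
      rw [← Matrix.mul_assoc ((U⁻¹)ᴴ) (Uᴴ) _, hWH, Matrix.one_mul,
        ← Matrix.mul_assoc U (U⁻¹) _, hUW, Matrix.one_mul]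
    have hZJ : Zᴴ * (Matrix.diagonal fun i : Fin (p + q + z) =>
        if (i : ℕ) < p then (1 : ℂ) else if (i : ℕ) < p + q then -1 else 0) * Z = -1 := by
      have hkB := key B
      rw [hUB, hXBc] at hkB
      rw [hkB]
      simp only [Matrix.mul_neg, Matrix.neg_mul, Matrix.mul_one]
      rw [hQ]
    have hZA : Zᴴ * (Matrix.diagonal fun i => (a i : ℂ)) * Z = Qᴴ * (Xᴴ * A * X) * Q := by
      have hkA := key A
      rw [hUA] at hkA
      exact hkA
    have hXAZ : Xᴴ * A * X = Q * (Zᴴ * (Matrix.diagonal fun i => (a i : ℂ)) * Z) * Qᴴ := by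
      rw [hZA]
      calc Xᴴ * A * X = (Q * Qᴴ) * (Xᴴ * A * X) * (Q * Qᴴ) := by
            rw [hQQ, Matrix.one_mul, Matrix.mul_one]
        _ = Q * (Qᴴ * (Xᴴ * A * X) * Q) * Qᴴ := by simp only [Matrix.mul_assoc]
    set Cz := Zᴴ * (Matrix.diagonal fun i => (a i : ℂ)) * Z with hCz
    have hval : t = ∑ l : Fin k, ω l * (Cz l l).re := by
      rw [ht, hXAZ]
      have h3 : D * (Q * Cz * Qᴴ) = (D * Q * Cz) * Qᴴ := by simp only [Matrix.mul_assoc]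
      rw [h3, Matrix.trace_mul_comm,
        show Qᴴ * (D * Q * Cz) = (Qᴴ * D * Q) * Cz by simp only [Matrix.mul_assoc], hQD]
      simp only [Matrix.trace, Matrix.diag_apply]
      rw [Complex.re_sum]
      refine Finset.sum_congr rfl fun l _ => ?_
      rw [Matrix.diagonal_mul]
      simp [Complex.mul_re]
    have hCzre : ∀ l : Fin k, (Cz l l).re
        = ∑ i : Fin (p+q+z), a i * Complex.normSq (Z i l) := by
      intro l
      have hentry : Cz l l = ∑ i, (star (Z i l) * (a i : ℂ)) * Z i l := by
        rw [hCz, Matrix.mul_apply]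
        refine Finset.sum_congr rfl fun i _ => ?_
        rw [Matrix.mul_diagonal, Matrix.conjTranspose_apply]
      rw [hentry, Complex.re_sum]
      refine Finset.sum_congr rfl fun i _ => ?_
      simp only [Complex.star_def, Complex.mul_re, Complex.mul_im, Complex.conj_re,
        Complex.conj_im, Complex.ofReal_re, Complex.ofReal_im, Complex.normSq_apply]
      ring
    -- data for core_ineq
    set tf : ℕ → ℕ → ℝ := fun s l =>
      if h : s < q ∧ l < k then Complex.normSq (Z ⟨p + s, by omega⟩ ⟨l, h.2⟩) else 0 with htf
    set bf : ℕ → ℝ := fun s => if h : s < q then a ⟨p + s, by omega⟩ else 0 with hbf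
    set wf : ℕ → ℝ := fun l => if h : l < k then ω ⟨l, h⟩ else 0 with hwf
    have htf0 : ∀ s l, 0 ≤ tf s l := by
      intro s l
      rw [htf]
      dsimp only
      split
      · exact Complex.normSq_nonneg _
      · exact le_rfl
    have htfpos : ∀ (s : Fin q) (l : Fin k),
        tf (s : ℕ) (l : ℕ) = Complex.normSq (Z ⟨p + (s:ℕ), by have := s.isLt; omega⟩ l) := by
      intro s l
      rw [htf]
      dsimp only
      rw [dif_pos ⟨s.isLt, l.isLt⟩]
    have hT : ∀ r m, r ≤ m → m < k →
        (m:ℝ) + 1 - r ≤ ∑ s ∈ Finset.range q, ∑ l ∈ Finset.range k,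
          (if r ≤ s ∧ l ≤ m then tf s l else 0) := by
      intro r m hrm hmk
      have hmat := block_trace_lb p q z k hkq Z hZJ r m hrm hmk
      refine le_trans hmat (le_of_eq ?_)
      rw [Finset.sum_comm]
      -- now LHS : ∑ i : Fin n, ∑ l : Fin k, if ...
      have hzero : ∀ i : Fin (p+q+z), ¬(p ≤ (i:ℕ) ∧ (i:ℕ) < p + q) →
          (∑ l : Fin k, if (l:ℕ) ≤ m ∧ p + r ≤ (i:ℕ) ∧ (i:ℕ) < p + q
            then Complex.normSq (Z i l) else 0) = 0 := by
        intro i hi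
        apply Finset.sum_eq_zero
        intro l _
        rw [if_neg]
        intro hcond
        exact hi ⟨by omega, hcond.2.2⟩
      rw [sum_fin_block _ hzero]
      rw [← Fin.sum_univ_eq_sum_range
        (fun s => ∑ l ∈ Finset.range k, if r ≤ s ∧ l ≤ m then tf s l else 0) q]
      refine Finset.sum_congr rfl fun s _ => ?_
      rw [← Fin.sum_univ_eq_sum_range (fun l => if r ≤ (s:ℕ) ∧ l ≤ m then tf (s:ℕ) l else 0) k]
      refine Finset.sum_congr rfl fun l _ => ?_
      rw [htfpos s l]
      refine if_congr ?_ rfl rfl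
      have hs := s.isLt
      show ((l:ℕ) ≤ m ∧ p + r ≤ p + (s:ℕ) ∧ p + (s:ℕ) < p + q) ↔ (r ≤ (s:ℕ) ∧ (l:ℕ) ≤ m)
      omega
    have hcore := core_ineq q k hkq bf wf tf
      (by rw [hbf]; dsimp only; rw [dif_pos (show 0 < q by omega)]; exact ha _)
      (by
        intro s hs
        rw [hbf]
        dsimp only
        rw [dif_pos (by omega : s < q), dif_pos (by omega : s + 1 < q)]
        exact hsort ⟨p + s, by omega⟩ ⟨p + (s+1), by omega⟩ (Nat.le_add_right p s)
          (by rw [Fin.mk_le_mk]; omega) (by dsimp only; omega))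
      (by
        intro l
        rw [hwf]
        dsimp only
        split
        · exact hω0 _
        · exact le_rfl)
      (by
        intro l
        rw [hwf]
        dsimp only
        by_cases h1 : l + 1 < k
        · rw [dif_pos h1, dif_pos (by omega : l < k)]
          exact hω (by rw [Fin.mk_le_mk]; omega)
        · rw [dif_neg h1]
          split
          · exact hω0 _
          · exact le_rfl)
      (by rw [hwf]; dsimp only; rw [dif_neg (lt_irrefl k)])
      htf0
      hT
    -- convert the target sum and the objective
    have htarget : (∑ i : Fin k, ω i * a ⟨p + (i : ℕ), by have := i.isLt; omega⟩)
        = ∑ l ∈ Finset.range k, wf l * bf l := by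
      rw [← Fin.sum_univ_eq_sum_range (fun l => wf l * bf l) k]
      refine Finset.sum_congr rfl fun l _ => ?_
      rw [hwf, hbf]
      dsimp only
      rw [dif_pos l.isLt, dif_pos (by have := l.isLt; omega : (l:ℕ) < q)]
    have hobj : ∑ s ∈ Finset.range q, ∑ l ∈ Finset.range k, bf s * wf l * tf s l ≤ t := by
      have hteq : t = ∑ i : Fin (p+q+z), ∑ l : Fin k, ω l * (a i * Complex.normSq (Z i l)) := by
        rw [hval]
        rw [Finset.sum_comm]
        refine Finset.sum_congr rfl fun l _ => ?_
        rw [hCzre l, Finset.mul_sum]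
      rw [hteq]
      rw [← Fin.sum_univ_eq_sum_range
        (fun s => ∑ l ∈ Finset.range k, bf s * wf l * tf s l) q]
      have hstep : ∀ s : Fin q,
          (∑ l ∈ Finset.range k, bf (s:ℕ) * wf l * tf (s:ℕ) l)
          = ∑ l : Fin k, ω l * (a ⟨p + (s:ℕ), by have := s.isLt; omega⟩
              * Complex.normSq (Z ⟨p + (s:ℕ), by have := s.isLt; omega⟩ l)) := by
        intro s
        rw [← Fin.sum_univ_eq_sum_range (fun l => bf (s:ℕ) * wf l * tf (s:ℕ) l) k]
        refine Finset.sum_congr rfl fun l _ => ?_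
        rw [htfpos s l, hbf, hwf]
        dsimp only
        rw [dif_pos (by have := s.isLt; omega : (s:ℕ) < q), dif_pos l.isLt]
        ring
      rw [Finset.sum_congr rfl (fun s _ => hstep s)]
      exact sum_fin_block_le (fun i => ∑ l : Fin k, ω l * (a i * Complex.normSq (Z i l)))
        (fun i => Finset.sum_nonneg fun l _ =>
          mul_nonneg (hω0 l) (mul_nonneg (ha i) (Complex.normSq_nonneg _)))
    -- assemble
    rw [htarget]
    exact le_trans hcore hobj
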